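/- Let G be a D-regular graph with edge set E of size m. If T is a d-disjunct collection of connected-subgraph tests with d ≥ 2D - 2, then T must contain the singleton test {e} for every edge e ∈ E; in particular |T| ≥ m. -/
import Mathlib

open scoped Classical

/-- A connected-subgraph test: the subgraph `(N(T), T)` is connected, i.e. all
vertices incident to an edge of `T` are pairwise reachable using the edges of `T`. -/
def ConnTest {V : Type*} (T : Finset (Sym2 V)) : Prop :=
  ∀ u ∈ (SimpleGraph.fromEdgeSet (↑T : Set (Sym2 V))).support,
    ∀ v ∈ (SimpleGraph.fromEdgeSet (↑T : Set (Sym2 V))).support,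
      (SimpleGraph.fromEdgeSet (↑T : Set (Sym2 V))).Reachable u v

lemma walk_closed {V : Type*} {H : SimpleGraph V} {S : Set V}
    (hS : ∀ x ∈ S, ∀ y, H.Adj x y → y ∈ S) {u w : V} (p : H.Walk u w) :
    u ∈ S → w ∈ S := by
  induction p with
  | nil => exact id
  | cons h p ih => exact fun hu => ih (hS _ hu _ h)

/-- on a `D`-regular graph, any `d`-disjunct collection of
connected-subgraph tests with `d ≥ 2D - 2` contains every singleton `{e}`;
in particular it has at least `m` tests. -/
theorem disjunct_regular_lower_bound {V : Type*} [Fintype V] [DecidableEq V]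
    (G : SimpleGraph V) (D d : ℕ) (hreg : G.IsRegularOfDegree D)
    (𝒯 : Finset (Finset (Sym2 V)))
    (htests : ∀ T ∈ 𝒯, T ⊆ G.edgeFinset ∧ ConnTest T)
    (hd : 2 * D - 2 ≤ d)
    (hdisj : ∀ e ∈ G.edgeFinset, ∀ B ⊆ G.edgeFinset, B.card ≤ d → e ∉ B →
      ∃ T ∈ 𝒯, e ∈ T ∧ T ∩ B = ∅) :
    (∀ e ∈ G.edgeFinset, {e} ∈ 𝒯) ∧ G.edgeFinset.card ≤ 𝒯.card := by
  have key : ∀ e ∈ G.edgeFinset, {e} ∈ 𝒯 := by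
    intro e he
    induction e using Sym2.ind with
    | _ u v =>
    have huv : G.Adj u v := by
      rwa [SimpleGraph.mem_edgeFinset, SimpleGraph.mem_edgeSet] at he
    set B : Finset (Sym2 V) :=
      (G.incidenceFinset u ∪ G.incidenceFinset v).erase s(u, v) with hB
    have hIu : G.incidenceFinset u ⊆ G.edgeFinset := fun f hf => by
      rw [SimpleGraph.mem_incidenceFinset] at hf
      exact SimpleGraph.mem_edgeFinset.mpr hf.1
    have hIv : G.incidenceFinset v ⊆ G.edgeFinset := fun f hf => by
      rw [SimpleGraph.mem_incidenceFinset] at hf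
      exact SimpleGraph.mem_edgeFinset.mpr hf.1
    have hBsub : B ⊆ G.edgeFinset := by
      intro f hf
      rcases Finset.mem_union.mp (Finset.mem_of_mem_erase hf) with h | h
      · exact hIu h
      · exact hIv h
    have hmemu : s(u, v) ∈ G.incidenceFinset u := by
      rw [SimpleGraph.mem_incidenceFinset]
      exact ⟨huv, Sym2.mem_mk_left u v⟩
    have hmemv : s(u, v) ∈ G.incidenceFinset v := by
      rw [SimpleGraph.mem_incidenceFinset]
      exact ⟨huv, Sym2.mem_mk_right u v⟩
    have hBcard : B.card ≤ d := by
      have h1 : (G.incidenceFinset u ∪ G.incidenceFinset v).card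
          + (G.incidenceFinset u ∩ G.incidenceFinset v).card
          = (G.incidenceFinset u).card + (G.incidenceFinset v).card :=
        Finset.card_union_add_card_inter _ _
      have h2 : 1 ≤ (G.incidenceFinset u ∩ G.incidenceFinset v).card :=
        Finset.card_pos.mpr ⟨s(u, v), Finset.mem_inter.mpr ⟨hmemu, hmemv⟩⟩
      have hcu : (G.incidenceFinset u).card = D := by
        rw [G.card_incidenceFinset_eq_degree]; exact hreg u
      have hcv : (G.incidenceFinset v).card = D := by
        rw [G.card_incidenceFinset_eq_degree]; exact hreg v
      have h3 : B.card = (G.incidenceFinset u ∪ G.incidenceFinset v).card - 1 :=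
        Finset.card_erase_of_mem (Finset.mem_union_left _ hmemu)
      omega
    have heB : s(u, v) ∉ B := Finset.notMem_erase _ _
    obtain ⟨T, hT𝒯, heT, hTB⟩ := hdisj s(u, v) he B hBsub hBcard heB
    obtain ⟨hTsub, hTconn⟩ := htests T hT𝒯
    set H := SimpleGraph.fromEdgeSet (↑T : Set (Sym2 V)) with hH
    have hclosed : ∀ x ∈ ({u, v} : Set V), ∀ y, H.Adj x y → y ∈ ({u, v} : Set V) := by
      intro x hx y hxy
      rw [hH, SimpleGraph.fromEdgeSet_adj] at hxy
      obtain ⟨hxyT, hne⟩ := hxy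
      have hxyT' : s(x, y) ∈ T := by exact_mod_cast hxyT
      have : s(x, y) = s(u, v) := by
        by_contra hne2
        have hxyB : s(x, y) ∈ B := by
          rw [hB, Finset.mem_erase]
          refine ⟨hne2, Finset.mem_union.mpr ?_⟩
          have hGxy : G.Adj x y := by
            have := hTsub hxyT'
            rwa [SimpleGraph.mem_edgeFinset, SimpleGraph.mem_edgeSet] at this
          rcases hx with hx | hx
          · left
            rw [SimpleGraph.mem_incidenceFinset]
            exact ⟨hGxy, by rw [← hx]; exact Sym2.mem_mk_left x y⟩
          · right
            rw [SimpleGraph.mem_incidenceFinset]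
            exact ⟨hGxy, by rw [← hx]; exact Sym2.mem_mk_left x y⟩
        have : s(x, y) ∈ T ∩ B := Finset.mem_inter.mpr ⟨hxyT', hxyB⟩
        rw [hTB] at this
        exact absurd this (Finset.notMem_empty _)
      rcases Sym2.eq_iff.mp this with ⟨_, rfl⟩ | ⟨_, rfl⟩
      · exact Or.inr rfl
      · exact Or.inl rfl
    have hHuv : H.Adj u v := by
      rw [hH, SimpleGraph.fromEdgeSet_adj]
      exact ⟨by exact_mod_cast heT, huv.ne⟩
    have hreachS : ∀ w ∈ H.support, w ∈ ({u, v} : Set V) := by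
      intro w hw
      have hu : u ∈ H.support := ⟨v, hHuv⟩
      obtain ⟨p⟩ := hTconn u hu w hw
      exact walk_closed hclosed p (Or.inl rfl)
    have hTeq : T = {s(u, v)} := by
      apply Finset.eq_singleton_iff_unique_mem.mpr
      refine ⟨heT, ?_⟩
      intro f hf
      induction f using Sym2.ind with
      | _ a b =>
      have hGab : G.Adj a b := by
        have := hTsub hf
        rwa [SimpleGraph.mem_edgeFinset, SimpleGraph.mem_edgeSet] at this
      have hHab : H.Adj a b := by
        rw [hH, SimpleGraph.fromEdgeSet_adj]
        exact ⟨by exact_mod_cast hf, hGab.ne⟩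
      have ha : a ∈ ({u, v} : Set V) := hreachS a ⟨b, hHab⟩
      have hb : b ∈ ({u, v} : Set V) := hreachS b ⟨a, hHab.symm⟩
      have hab : a ≠ b := hGab.ne
      rcases ha with ha | ha <;> rcases hb with hb | hb
      · exact absurd (ha.trans hb.symm) hab
      · subst ha; subst hb; rfl
      · subst ha; subst hb; exact Sym2.eq_swap
      · exact absurd (ha.trans hb.symm) hab
    rw [← hTeq]
    exact hT𝒯
  refine ⟨key, ?_⟩
  have : G.edgeFinset.image (fun e => ({e} : Finset (Sym2 V))) ⊆ 𝒯 := by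
    intro S hS
    obtain ⟨e, he, rfl⟩ := Finset.mem_image.mp hS
    exact key e he
  calc G.edgeFinset.card
      = (G.edgeFinset.image (fun e => ({e} : Finset (Sym2 V)))).card := by
        rw [Finset.card_image_of_injective _ (fun a b h => by
          simpa using h)]
    _ ≤ 𝒯.card := Finset.card_le_card this
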